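/- There exists a constant C > 0 such that for every natural number j ≥ 1 and every natural number w with 2^(2^(j−1)) ≤ w, ∑_{k=1}^{j} Real.sqrt ((2^k : ℝ)/k) ≤ C * Real.sqrt (Real.logb 2 (w : ℝ)). -/

import Mathlib

lemma biased_aux_sum (m : ℕ) :
    ∑ k ∈ Finset.Icc 1 (m+1), Real.sqrt ((2^k : ℝ)/(k : ℝ)) ≤
      10 * Real.sqrt ((2:ℝ)^m) := by
  induction m with
  | zero =>
    simp only [pow_zero, Real.sqrt_one, mul_one]
    rw [Finset.Icc_self, Finset.sum_singleton]
    norm_num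
    nlinarith [Real.sq_sqrt (by norm_num : (0:ℝ) ≤ 2), Real.sqrt_nonneg 2]
  | succ m ih =>
    rw [Finset.sum_Icc_succ_top (by omega : 1 ≤ m + 2)]
    have hpow : (0:ℝ) ≤ (2:ℝ)^m := by positivity
    have hterm : Real.sqrt ((2^(m+2) : ℝ)/((m+2 : ℕ) : ℝ)) ≤ 2 * Real.sqrt ((2:ℝ)^m) := by
      have h1 : ((2:ℝ)^(m+2))/((m+2 : ℕ) : ℝ) ≤ (2:ℝ)^(m+2) := by
        apply div_le_self (by positivity)
        have : (1:ℝ) ≤ ((m+2 : ℕ) : ℝ) := by exact_mod_cast Nat.one_le_iff_ne_zero.mpr (by omega)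
        linarith
      calc Real.sqrt ((2^(m+2) : ℝ)/((m+2 : ℕ) : ℝ)) ≤ Real.sqrt ((2:ℝ)^(m+2)) :=
            Real.sqrt_le_sqrt h1
        _ = 2 * Real.sqrt ((2:ℝ)^m) := by
            rw [pow_succ, pow_succ, mul_assoc, Real.sqrt_mul hpow]
            norm_num
            ring
    have h2 : Real.sqrt ((2:ℝ)^(m+1)) = Real.sqrt ((2:ℝ)^m) * Real.sqrt 2 := by
      rw [pow_succ, Real.sqrt_mul hpow]
    have hs := Real.sqrt_nonneg ((2:ℝ)^m)
    have ht := Real.sqrt_nonneg (2:ℝ)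
    have ht2 := Real.sq_sqrt (by norm_num : (0:ℝ) ≤ 2)
    have : 10 * Real.sqrt ((2:ℝ)^m) + 2 * Real.sqrt ((2:ℝ)^m) ≤
        10 * Real.sqrt ((2:ℝ)^(m+1)) := by
      rw [h2]
      nlinarith [mul_nonneg hs ht]
    calc ∑ k ∈ Finset.Icc 1 (m+1), Real.sqrt ((2^k : ℝ)/(k : ℝ)) +
          Real.sqrt ((2^(m+2) : ℝ)/((m+2 : ℕ) : ℝ))
        ≤ 10 * Real.sqrt ((2:ℝ)^m) + 2 * Real.sqrt ((2:ℝ)^m) := by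
          exact add_le_add ih hterm
      _ ≤ 10 * Real.sqrt ((2:ℝ)^(m+1)) := this

theorem biased_pred_working_set_bound :
    ∃ C : ℝ, 0 < C ∧ ∀ j : ℕ, 1 ≤ j → ∀ w : ℕ, 2^(2^(j-1)) ≤ w →
      ∑ k ∈ Finset.Icc 1 j, Real.sqrt ((2^k : ℝ)/(k : ℝ)) ≤
        C * Real.sqrt (Real.logb 2 (w : ℝ)) := by
  refine ⟨10, by norm_num, ?_⟩
  intro j hj w hw
  obtain ⟨m, rfl⟩ : ∃ m, j = m + 1 := ⟨j - 1, by omega⟩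
  simp only [Nat.add_sub_cancel] at hw
  have hwR : (2:ℝ)^(2^m) ≤ (w:ℝ) := by exact_mod_cast hw
  have hlog : (2:ℝ)^m ≤ Real.logb 2 (w : ℝ) := by
    have h1 : Real.logb 2 ((2:ℝ)^(2^m)) ≤ Real.logb 2 (w:ℝ) :=
      Real.logb_le_logb_of_le (by norm_num) (by positivity) hwR
    rwa [Real.logb_pow, Real.logb_self_eq_one (by norm_num),
      mul_one, Nat.cast_pow, Nat.cast_ofNat] at h1
  have := biased_aux_sum m
  have hsq : Real.sqrt ((2:ℝ)^m) ≤ Real.sqrt (Real.logb 2 (w:ℝ)) :=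
    Real.sqrt_le_sqrt hlog
  calc ∑ k ∈ Finset.Icc 1 (m+1), Real.sqrt ((2^k : ℝ)/(k : ℝ))
      ≤ 10 * Real.sqrt ((2:ℝ)^m) := this
    _ ≤ 10 * Real.sqrt (Real.logb 2 (w:ℝ)) := by linarith
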